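/- Let γ, f, u, g, v be formal power series in ℂ⟦t⟧ with γ ≠ 0, with the constant coefficient of γ equal to 0 and the constant coefficient of g nonzero, and suppose f + γ·u + γ'·(g + γ·v) = 0, where γ' is the formal derivative of γ. Then f ≠ 0 and ord(γ) = ord(f) + 1. (Geometrically: if a leaf of the strict transform of a dicritical foliation of order k through the point (0,t₀) of the exceptional divisor is parameterized as x = γ(t), then its intersection multiplicity with the exceptional divisor x = 0 equals the multiplicity of t₀ as a zero of f(1,t) plus one.) -/

import Mathlib

open PowerSeries

private lemma order_neg' (φ : PowerSeries ℂ) : (-φ).order = φ.order := by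
  have key : ∀ ψ : PowerSeries ℂ, ψ.order ≤ (-ψ).order := by
    intro ψ
    refine le_order (-ψ) ψ.order fun i hi => ?_
    simp [coeff_of_lt_order i hi]
  refine le_antisymm ?_ (key φ)
  simpa using key (-φ)

/-- For a leaf `x = γ(t)` of the strict transform of a dicritical foliation
through a nonsingular point of the exceptional divisor: from the relation
`f + γu + γ'(g + γv) = 0` with `γ(0) = 0`, `γ ≠ 0` and `g(0) ≠ 0`, one gets
`f ≠ 0` and `ord(γ) = ord(f) + 1` (intersection multiplicity with the
exceptional divisor is the multiplicity of the zero of `f` plus one). -/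
theorem order_leaf_eq_order_f_add_one (γ f u g v : PowerSeries ℂ)
    (hγ0 : γ ≠ 0)
    (hγc : constantCoeff γ = 0)
    (hg : constantCoeff g ≠ 0)
    (heq : f + γ * u + γ.derivativeFun * (g + γ * v) = 0) :
    f ≠ 0 ∧ γ.order = f.order + 1 := by
  -- γ.order is a natural number
  obtain ⟨m, hm⟩ : ∃ m : ℕ, γ.order = m := by
    have h := PowerSeries.order_finite_iff_ne_zero.mpr hγ0
    obtain ⟨m, hm⟩ := WithTop.ne_top_iff_exists.mp h.ne
    exact ⟨m, hm.symm⟩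
  rw [order_eq_nat] at hm
  obtain ⟨hmne, hmlt⟩ := hm
  -- m ≥ 1
  have hm0 : m ≠ 0 := by
    rintro rfl
    exact hmne (by simpa [coeff_zero_eq_constantCoeff] using hγc)
  obtain ⟨k, rfl⟩ := Nat.exists_eq_succ_of_ne_zero hm0
  have hγord : γ.order = (k + 1 : ℕ) := order_eq_nat.mpr ⟨hmne, hmlt⟩
  -- order of the derivative is k
  have hd : γ.derivativeFun.order = (k : ℕ) := by
    rw [order_eq_nat]
    constructor
    · rw [show γ.derivativeFun = d⁄dX ℂ γ from rfl, coeff_derivative]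
      exact mul_ne_zero hmne (Nat.cast_add_one_ne_zero k)
    · intro i hi
      rw [show γ.derivativeFun = d⁄dX ℂ γ from rfl, coeff_derivative, hmlt (i + 1) (by omega), zero_mul]
  -- order of (g + γ v) is 0
  have hG : (g + γ * v).order = (0 : ℕ) := by
    rw [order_eq_nat]
    refine ⟨?_, fun i hi => absurd hi (Nat.not_lt_zero i)⟩
    rw [coeff_zero_eq_constantCoeff]
    simp [map_add, map_mul, hγc, hg]
  -- order of the second summand is k
  have hB : (γ.derivativeFun * (g + γ * v)).order = (k : ℕ) := by
    rw [order_mul, hd, hG]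
    simp
  -- order of the first summand is ≥ k+1
  have hA : ((k : ℕ∞) + 1) ≤ (γ * u).order := by
    calc ((k : ℕ∞) + 1) = γ.order + 0 := by rw [hγord]; push_cast; ring
    _ ≤ γ.order + u.order := by exact add_le_add le_rfl (by simp)
    _ ≤ (γ * u).order := le_order_mul γ u
  -- f = -(γu + γ'(g+γv))
  have hf : f = -(γ * u + γ.derivativeFun * (g + γ * v)) := by
    linear_combination heq
  have hkk : (k : ℕ∞) < (k : ℕ∞) + 1 := by
    exact_mod_cast Nat.lt_succ_self k
  have hne : (γ * u).order ≠ (γ.derivativeFun * (g + γ * v)).order := by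
    rw [hB]
    intro h
    rw [h] at hA
    exact absurd hA (not_le.mpr hkk)
  have hford : f.order = (k : ℕ) := by
    rw [hf, order_neg', order_add_of_order_ne _ _ hne, hB]
    exact min_eq_right (le_trans hkk.le hA)
  constructor
  · intro h0
    rw [h0, order_zero] at hford
    exact (ENat.top_ne_coe k) hford
  · rw [hγord, hford]
    push_cast
    ring
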